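/- For a > 0 and α₀ ∈ ℝ, the eigenvalue λₙ = (πn/(2a))² (n ≥ 1) of the transversal operator −d²/dx² on (−a,a) with boundary conditions ψ'(±a) = −iα₀ψ(±a) is of positive type with respect to the parity involution P if n is even and α₀² < λₙ or n is odd and α₀² > λₙ; and of negative type if n is odd and α₀² < λₙ or n is even and α₀² > λₙ. Concretely: the sign of (Pψₙ, ψₙ) = a(−1)ⁿ(λₙ − α₀²)/λₙ is positive in the first case and negative in the second. -/

import Mathlib

open Complex

private lemma trig_id14 (u v β : ℂ) :
    (Complex.cos (v - u) - β * Complex.sin (v - u)) *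
      (Complex.cos (u + v) + β * Complex.sin (u + v))
      = (1 - β ^ 2) / 2 * Complex.cos (u + u) + (1 + β ^ 2) / 2 * Complex.cos (v + v)
        + β * Complex.sin (u + u) := by
  simp only [Complex.cos_sub, Complex.sin_sub, Complex.cos_add, Complex.sin_add]
  linear_combination
    (Complex.cos v ^ 2 - β ^ 2 * Complex.sin v ^ 2 - 1 / 2 + β ^ 2 / 2) *
      Complex.sin_sq_add_cos_sq u
    + (2 * β * Complex.cos u * Complex.sin u + β ^ 2 * Complex.sin u ^ 2 + 1 / 2 - β ^ 2 / 2
        - Complex.sin u ^ 2) * Complex.sin_sq_add_cos_sq v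

private lemma hasDerivAt_csin (c : ℝ) (x : ℝ) :
    HasDerivAt (fun x : ℝ => Complex.sin ((c : ℂ) * x)) ((c : ℂ) * Complex.cos ((c : ℂ) * x)) x := by
  have h1 : HasDerivAt (fun z : ℂ => Complex.sin ((c : ℂ) * z))
      (Complex.cos ((c : ℂ) * x) * ((c : ℂ) * 1)) (x : ℂ) :=
    (Complex.hasDerivAt_sin ((c : ℂ) * x)).comp _ ((hasDerivAt_id ((x : ℝ) : ℂ)).const_mul (c : ℂ))
  simpa [mul_comm] using h1.comp_ofReal

private lemma hasDerivAt_ccos (c : ℝ) (x : ℝ) :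
    HasDerivAt (fun x : ℝ => Complex.cos ((c : ℂ) * x))
      (-((c : ℂ) * Complex.sin ((c : ℂ) * x))) x := by
  have h1 : HasDerivAt (fun z : ℂ => Complex.cos ((c : ℂ) * z))
      (-Complex.sin ((c : ℂ) * x) * ((c : ℂ) * 1)) (x : ℂ) :=
    (Complex.hasDerivAt_cos ((c : ℂ) * x)).comp _ ((hasDerivAt_id ((x : ℝ) : ℂ)).const_mul (c : ℂ))
  have h2 := h1.comp_ofReal
  convert h2 using 1
  ring

/-- definiteness type of the eigenvalue `λₙ = (πn/(2a))²` of the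
transversal operator w.r.t. parity: the parity inner product
`(Pψₙ, ψₙ) = ∫_{−a}^{a} ψₙ(−x) conj(ψₙ(x)) dx = a (−1)ⁿ (λₙ − α₀²)/λₙ` is
positive if (`n` even and `α₀² < λₙ`) or (`n` odd and `α₀² > λₙ`), and negative
if (`n` odd and `α₀² < λₙ`) or (`n` even and `α₀² > λₙ`). -/
theorem transversal_eigenvalue_type
    (a α₀ : ℝ) (ha : 0 < a) (n : ℕ) (hn : 1 ≤ n)
    (k lam : ℝ) (hk : k = Real.pi * n / (2 * a)) (hlam : lam = k ^ 2)
    (ψ : ℝ → ℂ)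
    (hψ : ψ = fun x : ℝ => Complex.cos (k * ((x : ℂ) + a))
      - (I * α₀ / k) * Complex.sin (k * ((x : ℂ) + a))) :
    ((Even n ∧ α₀ ^ 2 < lam) ∨ (Odd n ∧ lam < α₀ ^ 2) →
      ∃ r : ℝ, 0 < r ∧ r = a * (-1 : ℝ) ^ n * (lam - α₀ ^ 2) / lam ∧
        (∫ x in (-a)..a, ψ (-x) * (starRingEnd ℂ) (ψ x)) = (r : ℂ)) ∧
    ((Odd n ∧ α₀ ^ 2 < lam) ∨ (Even n ∧ lam < α₀ ^ 2) →
      ∃ r : ℝ, r < 0 ∧ r = a * (-1 : ℝ) ^ n * (lam - α₀ ^ 2) / lam ∧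
        (∫ x in (-a)..a, ψ (-x) * (starRingEnd ℂ) (ψ x)) = (r : ℂ)) := by
  have hn' : (0 : ℝ) < n := by exact_mod_cast hn
  have hk0 : 0 < k := by
    rw [hk]; exact div_pos (mul_pos Real.pi_pos hn') (by linarith)
  have hkne : (k : ℂ) ≠ 0 := by exact_mod_cast hk0.ne'
  have hlam0 : 0 < lam := by rw [hlam]; positivity
  set β : ℂ := I * α₀ / k with hβ
  set c : ℝ := 2 * k with hc
  have hca : c * a = n * Real.pi := by
    rw [hc, hk]; field_simp
  -- conjugate of ψ
  have hconj : ∀ x : ℝ, (starRingEnd ℂ) (ψ x)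
      = Complex.cos ((k : ℂ) * x + (k : ℂ) * a) + β * Complex.sin ((k : ℂ) * x + (k : ℂ) * a) := by
    intro x
    have e1 : (k : ℂ) * ((x : ℂ) + a) = ((k * (x + a) : ℝ) : ℂ) := by push_cast; ring
    have e2 : (k : ℂ) * x + (k : ℂ) * a = ((k * (x + a) : ℝ) : ℂ) := by push_cast; ring
    rw [hψ]
    simp only [e1, e2, ← Complex.ofReal_cos, ← Complex.ofReal_sin, map_sub, map_mul, map_div₀,
      Complex.conj_ofReal, Complex.conj_I, hβ]
    ring
  have hψneg : ∀ x : ℝ, ψ (-x)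
      = Complex.cos ((k : ℂ) * a - (k : ℂ) * x) - β * Complex.sin ((k : ℂ) * a - (k : ℂ) * x) := by
    intro x
    have e1 : (k : ℂ) * (((-x : ℝ) : ℂ) + a) = (k : ℂ) * a - (k : ℂ) * x := by push_cast; ring
    rw [hψ]; simp only [e1, hβ]
  -- pointwise product formula
  have hprod : ∀ x : ℝ, ψ (-x) * (starRingEnd ℂ) (ψ x)
      = (1 - β ^ 2) / 2 * Complex.cos ((c : ℂ) * x) + (1 + β ^ 2) / 2 * Complex.cos ((c : ℂ) * a)
        + β * Complex.sin ((c : ℂ) * x) := by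
    intro x
    rw [hψneg x, hconj x, trig_id14 ((k : ℂ) * x) ((k : ℂ) * a) β]
    have e1 : (k : ℂ) * x + (k : ℂ) * x = (c : ℂ) * x := by push_cast [hc]; ring
    have e2 : (k : ℂ) * a + (k : ℂ) * a = (c : ℂ) * a := by push_cast [hc]; ring
    rw [e1, e2]
  -- antiderivative
  set F : ℝ → ℂ := fun x => (1 - β ^ 2) / (4 * (k : ℂ)) * Complex.sin ((c : ℂ) * x)
      + (1 + β ^ 2) / 2 * Complex.cos ((c : ℂ) * a) * x
      - β / (2 * (k : ℂ)) * Complex.cos ((c : ℂ) * x) with hF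
  have hder : ∀ x : ℝ, HasDerivAt F (ψ (-x) * (starRingEnd ℂ) (ψ x)) x := by
    intro x
    have h := (((hasDerivAt_csin c x).const_mul ((1 - β ^ 2) / (4 * (k : ℂ)))).add
        (((hasDerivAt_id x).ofReal_comp).const_mul ((1 + β ^ 2) / 2 * Complex.cos ((c : ℂ) * a)))).sub
        ((hasDerivAt_ccos c x).const_mul (β / (2 * (k : ℂ))))
    refine h.congr_deriv ?_
    rw [hprod x]
    have hcC : (c : ℂ) = 2 * (k : ℂ) := by push_cast [hc]; ring
    rw [hcC]
    field_simp
    push_cast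
    ring
  have hcont : Continuous fun x : ℝ => ψ (-x) * (starRingEnd ℂ) (ψ x) := by
    have : (fun x : ℝ => ψ (-x) * (starRingEnd ℂ) (ψ x))
        = fun x : ℝ => (1 - β ^ 2) / 2 * Complex.cos ((c : ℂ) * x)
          + (1 + β ^ 2) / 2 * Complex.cos ((c : ℂ) * a) + β * Complex.sin ((c : ℂ) * x) := by
      funext x; exact hprod x
    rw [this]
    fun_prop
  have hint : (∫ x in (-a)..a, ψ (-x) * (starRingEnd ℂ) (ψ x)) = F a - F (-a) :=
    intervalIntegral.integral_eq_sub_of_hasDerivAt (fun x _ => hder x)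
      (hcont.intervalIntegrable _ _)
  -- evaluate
  have hsin0 : Complex.sin ((c : ℂ) * a) = 0 := by
    have : (c : ℂ) * a = ((c * a : ℝ) : ℂ) := by push_cast; ring
    rw [this, ← Complex.ofReal_sin, hca, Real.sin_nat_mul_pi]; simp
  have hcosn : Complex.cos ((c : ℂ) * a) = (-1 : ℂ) ^ n := by
    have : (c : ℂ) * a = ((c * a : ℝ) : ℂ) := by push_cast; ring
    rw [this, ← Complex.ofReal_cos, hca]
    have := Real.cos_nat_mul_pi_sub 0 n
    simp only [sub_zero, Real.cos_zero, mul_one] at this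
    rw [this]; push_cast; ring
  have hsinneg : Complex.sin ((c : ℂ) * (-a : ℝ)) = 0 := by
    have : (c : ℂ) * ((-a : ℝ) : ℂ) = -((c : ℂ) * a) := by push_cast; ring
    rw [this, Complex.sin_neg, hsin0, neg_zero]
  have hcosneg : Complex.cos ((c : ℂ) * (-a : ℝ)) = (-1 : ℂ) ^ n := by
    have : (c : ℂ) * ((-a : ℝ) : ℂ) = -((c : ℂ) * a) := by push_cast; ring
    rw [this, Complex.cos_neg, hcosn]
  set r : ℝ := a * (-1 : ℝ) ^ n * (lam - α₀ ^ 2) / lam with hr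
  have hval : (∫ x in (-a)..a, ψ (-x) * (starRingEnd ℂ) (ψ x)) = (r : ℂ) := by
    rw [hint, hF]
    simp only [hsin0, hsinneg, hcosn, hcosneg]
    have hβsq : β ^ 2 = -(α₀ : ℂ) ^ 2 / (k : ℂ) ^ 2 := by
      rw [hβ]; field_simp; ring_nf; rw [Complex.I_sq]; ring
    have hlamC : ((lam : ℝ) : ℂ) = (k : ℂ) ^ 2 := by rw [hlam]; push_cast; ring
    have hlamne : ((lam : ℝ) : ℂ) ≠ 0 := by
      exact_mod_cast hlam0.ne'
    rw [hr]
    push_cast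
    rw [hβsq, hlamC]
    have hk2 : (k : ℂ) ^ 2 ≠ 0 := pow_ne_zero 2 hkne
    field_simp
    ring
  have hrval : r = a * (-1 : ℝ) ^ n * (lam - α₀ ^ 2) / lam := hr
  constructor
  · rintro (⟨he, hl⟩ | ⟨ho, hl⟩)
    · refine ⟨r, ?_, hrval, hval⟩
      rw [hr, he.neg_one_pow]
      have : 0 < a * 1 * (lam - α₀ ^ 2) := by nlinarith
      positivity
    · refine ⟨r, ?_, hrval, hval⟩
      rw [hr, ho.neg_one_pow]
      have h1 : 0 < a * (α₀ ^ 2 - lam) := by nlinarith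
      have : a * (-1 : ℝ) * (lam - α₀ ^ 2) = a * (α₀ ^ 2 - lam) := by ring
      rw [this]
      positivity
  · rintro (⟨ho, hl⟩ | ⟨he, hl⟩)
    · refine ⟨r, ?_, hrval, hval⟩
      rw [hr, ho.neg_one_pow]
      have h1 : 0 < a * (lam - α₀ ^ 2) := by nlinarith
      have : a * (-1 : ℝ) * (lam - α₀ ^ 2) / lam = -(a * (lam - α₀ ^ 2) / lam) := by ring
      rw [this]
      simp only [neg_neg, neg_lt_zero]
      positivity
    · refine ⟨r, ?_, hrval, hval⟩
      rw [hr, he.neg_one_pow]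
      have h1 : 0 < a * (α₀ ^ 2 - lam) := by nlinarith
      have : a * (1 : ℝ) * (lam - α₀ ^ 2) / lam = -(a * (α₀ ^ 2 - lam) / lam) := by ring
      rw [this]
      simp only [neg_lt_zero]
      positivity
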